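/- Let F : SL(3,ℝ) → ℂ be continuous and invariant under left translation by SL(3,ℤ). Then for every g ∈ SL(3,ℝ), every m,n ∈ ℤ, and every matrix [[a,b],[c,d]] ∈ SL(2,ℤ), one has [P^{m,n}F](γ̃·g) = [P^{ma+nc, mb+nd}F](g), where γ̃ ∈ SL(3,ℝ) is the block-diagonal matrix with upper-left 2×2 block [[a,b],[c,d]] and lower-right entry 1. -/

import Mathlib

open scoped Real

noncomputable section

abbrev SL3 := Matrix.SpecialLinearGroup (Fin 3) ℝ

/-- The subspace topology on `SL(3,ℝ)`, induced from the space of matrices. -/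
instance : TopologicalSpace SL3 :=
  TopologicalSpace.induced (fun g : SL3 => (g : Matrix (Fin 3) (Fin 3) ℝ)) inferInstance

/-- The upper-triangular unipotent matrix `u(x,y,z)` in `SL(3,ℝ)`. -/
def uMat (x y z : ℝ) : SL3 :=
  ⟨!![1, x, z; 0, 1, y; 0, 0, 1], by
    simp [Matrix.det_fin_three, Matrix.vecHead, Matrix.vecTail]⟩

/-- The Fourier coefficient `[P^{m,n}F](g) = ∫₀¹∫₀¹ F(u(0,y,z)g) e^{-2πi(mz+ny)} dy dz`. -/
def Pmn (F : SL3 → ℂ) (m n : ℤ) (g : SL3) : ℂ :=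
  ∫ z in (0:ℝ)..1, ∫ y in (0:ℝ)..1,
    F (uMat 0 y z * g) * Complex.exp (-2 * π * Complex.I * (m * z + n * y))

/-- The block-diagonal embedding of `[[a,b],[c,d]] ∈ SL(2,ℤ)` into `SL(3,ℝ)`. -/
def gammaTilde (a b c d : ℤ) (h : a * d - b * c = 1) : SL3 :=
  ⟨!![(a : ℝ), b, 0; (c : ℝ), d, 0; 0, 0, 1], by
    have h' : ((a : ℝ) * d - b * c) = 1 := by exact_mod_cast congrArg (Int.cast : ℤ → ℝ) h
    simp [Matrix.det_fin_three, Matrix.vecHead, Matrix.vecTail]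
    linarith⟩


open MeasureTheory Set

/-- Integer vectors lie in the ℤ-span of the standard basis, and conversely. -/
lemma mem_zspan_iff (x : Fin 2 → ℝ) :
    x ∈ Submodule.span ℤ (Set.range (Pi.basisFun ℝ (Fin 2))) ↔
      ∃ p : Fin 2 → ℤ, x = fun i => (p i : ℝ) := by
  constructor
  · intro hx
    induction hx using Submodule.span_induction with
    | mem v hv =>
      obtain ⟨i, rfl⟩ := hv
      exact ⟨Pi.single i 1, by
        funext j
        by_cases hij : j = i <;> simp [Pi.basisFun_apply, Pi.single_apply, hij]⟩
    | zero => exact ⟨0, by funext j; simp⟩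
    | add u v _ _ hu hv =>
      obtain ⟨p, rfl⟩ := hu; obtain ⟨q, rfl⟩ := hv
      exact ⟨p + q, by funext j; simp⟩
    | smul z v _ hv =>
      obtain ⟨p, rfl⟩ := hv
      exact ⟨z • p, by funext j; simp⟩
  · rintro ⟨p, rfl⟩
    have : (fun i => (p i : ℝ)) = ∑ i : Fin 2, p i • (Pi.basisFun ℝ (Fin 2)) i := by
      funext j
      rw [Finset.sum_apply, Fin.sum_univ_two]
      fin_cases j <;> simp [Pi.basisFun_apply, Pi.single_apply]
    rw [this]
    exact Submodule.sum_mem _ fun i _ =>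
      Submodule.smul_mem _ _ (Submodule.subset_span ⟨i, rfl⟩)

lemma sq_integral_comp (A B : Matrix (Fin 2) (Fin 2) ℤ)
    (hAB : A * B = 1) (hBA : B * A = 1)
    (G : (Fin 2 → ℝ) → ℂ)
    (hper : ∀ (p : Fin 2 → ℤ) (x : Fin 2 → ℝ), G ((fun i => (p i : ℝ)) + x) = G x) :
    ∫ x in Set.pi Set.univ (fun _ : Fin 2 => Set.Ico (0:ℝ) 1),
        G ((A.map (Int.cast : ℤ → ℝ)).mulVec x)
      = ∫ x in Set.pi Set.univ (fun _ : Fin 2 => Set.Ico (0:ℝ) 1), G x := by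
  set M : Matrix (Fin 2) (Fin 2) ℝ := A.map (Int.cast : ℤ → ℝ) with hM
  set N : Matrix (Fin 2) (Fin 2) ℝ := B.map (Int.cast : ℤ → ℝ) with hN
  have castmul : ∀ (P Q : Matrix (Fin 2) (Fin 2) ℤ), P * Q = 1 →
      P.map (Int.cast : ℤ → ℝ) * Q.map (Int.cast : ℤ → ℝ) = 1 := by
    intro P Q hPQ
    have := congrArg (⇑((Int.castRingHom ℝ).mapMatrix : Matrix (Fin 2) (Fin 2) ℤ →+* Matrix (Fin 2) (Fin 2) ℝ)) hPQ
    simpa [map_mul, RingHom.mapMatrix_apply, Int.coe_castRingHom] using this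
  have hMN : M * N = 1 := castmul A B hAB
  have hNM : N * M = 1 := castmul B A hBA
  have hInv : Invertible M := ⟨N, hNM, hMN⟩
  set e : (Fin 2 → ℝ) ≃ₗ[ℝ] (Fin 2 → ℝ) := M.toLinearEquiv' hInv with he
  have hecoe : (⇑e : (Fin 2 → ℝ) → (Fin 2 → ℝ)) = fun x => M.mulVec x := rfl
  -- determinant
  have hdetA : A.det = 1 ∨ A.det = -1 := by
    have : A.det * B.det = 1 := by rw [← Matrix.det_mul, hAB, Matrix.det_one]
    exact Int.isUnit_iff.mp (IsUnit.of_mul_eq_one _ this)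
  have hdetM : M.det = (A.det : ℝ) := ((Int.castRingHom ℝ).map_det A).symm
  have habs : |M.det| = 1 := by
    rcases hdetA with h1 | h1 <;> rw [hdetM, h1] <;> norm_num
  have hdetlin : LinearMap.det (Matrix.toLin' M) = M.det := LinearMap.det_toLin' M
  have hcont : Continuous (⇑e) := (Matrix.toLin' M).continuous_of_finiteDimensional
  have hmp : MeasurePreserving (⇑e) (volume : Measure (Fin 2 → ℝ)) volume := by
    refine ⟨hcont.measurable, ?_⟩
    have hne : LinearMap.det (Matrix.toLin' M) ≠ 0 := by
      rw [hdetlin]; intro h0; rw [h0] at habs; norm_num at habs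
    have : (⇑e : (Fin 2 → ℝ) → (Fin 2 → ℝ)) = ⇑(Matrix.toLin' M) := rfl
    rw [this, Real.map_linearMap_volume_pi_eq_smul_volume_pi hne, hdetlin]
    rw [abs_inv, habs]
    norm_num
  have hemb : MeasurableEmbedding (⇑e) :=
    e.toContinuousLinearEquiv.toHomeomorph.measurableEmbedding
  set b₀ := Pi.basisFun ℝ (Fin 2) with hb₀
  set b₁ := b₀.map e with hb₁
  have hD : Set.pi Set.univ (fun _ : Fin 2 => Set.Ico (0:ℝ) 1) = ZSpan.fundamentalDomain b₀ :=
    (ZSpan.fundamentalDomain_pi_basisFun).symm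
  -- span equality
  have hcol : ∀ i, b₁ i = fun j => ((A j i : ℤ) : ℝ) := by
    intro i
    funext j
    show (M.mulVec (b₀ i)) j = _
    fin_cases i <;> fin_cases j <;>
      simp [hb₀, hM, Pi.basisFun_apply, Matrix.mulVec, dotProduct, Fin.sum_univ_two,
        Pi.single_apply, Matrix.map_apply]
  have hspan : Submodule.span ℤ (Set.range b₁) = Submodule.span ℤ (Set.range b₀) := by
    apply le_antisymm
    · rw [Submodule.span_le]
      rintro _ ⟨i, rfl⟩
      rw [SetLike.mem_coe, mem_zspan_iff]
      exact ⟨fun j => A j i, hcol i⟩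
    · rw [Submodule.span_le]
      rintro _ ⟨i, rfl⟩
      have hrep : b₀ i = ∑ j, B j i • b₁ j := by
        have h1 : (∑ j, B j i • b₁ j) = e (∑ j, B j i • b₀ j) := by
          rw [map_sum]
          refine Finset.sum_congr rfl fun j _ => ?_
          rw [map_zsmul, hb₁, Module.Basis.map_apply]
        have h2 : (∑ j, (B j i) • b₀ j) = N.mulVec (Pi.single i 1) := by
          funext l
          rw [Finset.sum_apply, Fin.sum_univ_two]
          simp [hb₀, Pi.basisFun_apply, Matrix.mulVec, dotProduct, Fin.sum_univ_two,
            Pi.single_apply, hN]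
          fin_cases i <;> fin_cases l <;> simp [Matrix.map_apply] <;> try ring
        have h3 : e (N.mulVec (Pi.single i 1)) = Pi.single i 1 := by
          show M.mulVec (N.mulVec (Pi.single i 1)) = _
          rw [Matrix.mulVec_mulVec, hMN, Matrix.one_mulVec]
        have h4 : b₀ i = Pi.single i 1 := by
          funext l
          simp [hb₀, Pi.basisFun_apply]
        rw [h1, h2, h3, h4]
      rw [SetLike.mem_coe, hrep]
      exact Submodule.sum_mem _ fun j _ =>
        Submodule.smul_mem _ _ (Submodule.subset_span ⟨j, rfl⟩)
  have hfd₀ := ZSpan.isAddFundamentalDomain b₀ (volume : Measure (Fin 2 → ℝ))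
  have hfd₁ := ZSpan.isAddFundamentalDomain b₁ (volume : Measure (Fin 2 → ℝ))
  rw [hspan] at hfd₁
  haveI : MeasurableVAdd (↥(Submodule.span ℤ (Set.range ⇑b₀))) (Fin 2 → ℝ) := by
    refine { measurable_const_vadd := fun c => ?_, measurable_vadd_const := fun x => ?_ }
    · exact measurable_const_add (c : Fin 2 → ℝ)
    · exact measurable_subtype_coe.add_const x
  haveI : VAddInvariantMeasure (↥(Submodule.span ℤ (Set.range ⇑b₀))) (Fin 2 → ℝ) volume :=
    ⟨fun c s _ => by
      have hc : ((fun x => c +ᵥ x) : (Fin 2 → ℝ) → (Fin 2 → ℝ)) =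
          fun x => (c : Fin 2 → ℝ) + x := rfl
      rw [hc, measure_preimage_add]⟩
  have hinvG : ∀ (γ : Submodule.span ℤ (Set.range b₀)) (x : Fin 2 → ℝ), G (γ +ᵥ x) = G x := by
    rintro ⟨v, hv⟩ x
    obtain ⟨p, rfl⟩ := (mem_zspan_iff v).mp hv
    exact hper p x
  calc ∫ x in Set.pi Set.univ (fun _ : Fin 2 => Set.Ico (0:ℝ) 1), G (M.mulVec x)
      = ∫ x in ZSpan.fundamentalDomain b₀, G (e x) := by rw [hD]; rfl
    _ = ∫ y in e '' (ZSpan.fundamentalDomain b₀), G y :=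
        (hmp.setIntegral_image_emb hemb G _).symm
    _ = ∫ y in ZSpan.fundamentalDomain b₁, G y := by
        rw [ZSpan.map_fundamentalDomain b₀ e]
    _ = ∫ y in ZSpan.fundamentalDomain b₀, G y := hfd₁.setIntegral_eq hfd₀ hinvG
    _ = _ := by rw [hD]

lemma fin_two_eta (x : Fin 2 → ℝ) : ![x 0, x 1] = x := by
  funext i; fin_cases i <;> rfl

lemma double_integral_eq (G : (Fin 2 → ℝ) → ℂ) (hG : Continuous G) :
    (∫ z in (0:ℝ)..1, ∫ y in (0:ℝ)..1, G ![z, y])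
      = ∫ x in Set.pi Set.univ (fun _ : Fin 2 => Set.Ico (0:ℝ) 1), G x := by
  have hcont : Continuous fun p : ℝ × ℝ => G ![p.1, p.2] := by
    apply hG.comp
    refine continuous_pi fun i => ?_
    fin_cases i
    · simpa using continuous_fst
    · simpa using continuous_snd
  have hint : IntegrableOn (fun p : ℝ × ℝ => G ![p.1, p.2])
      (Set.Ico (0:ℝ) 1 ×ˢ Set.Ico (0:ℝ) 1) volume := by
    have hsub : (Set.Ico (0:ℝ) 1 ×ˢ Set.Ico (0:ℝ) 1) ⊆ Set.Icc ((0:ℝ), (0:ℝ)) (1, 1) := by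
      rw [Set.Icc_prod_eq]
      exact Set.prod_mono Set.Ico_subset_Icc_self Set.Ico_subset_Icc_self
    exact (hcont.continuousOn.integrableOn_compact isCompact_Icc).mono_set hsub
  have h1 : ∀ z : ℝ, (∫ y in (0:ℝ)..1, G ![z, y]) = ∫ y in Set.Ico (0:ℝ) 1, G ![z, y] := by
    intro z
    rw [intervalIntegral.integral_of_le zero_le_one, integral_Ioc_eq_integral_Ioo,
      ← integral_Ico_eq_integral_Ioo]
  have hpre : (MeasurableEquiv.finTwoArrow ⁻¹' (Set.Ico (0:ℝ) 1 ×ˢ Set.Ico (0:ℝ) 1))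
      = Set.pi Set.univ (fun _ : Fin 2 => Set.Ico (0:ℝ) 1) := by
    ext x
    simp [MeasurableEquiv.finTwoArrow, Fin.forall_fin_two]
  calc (∫ z in (0:ℝ)..1, ∫ y in (0:ℝ)..1, G ![z, y])
      = ∫ z in Set.Ico (0:ℝ) 1, ∫ y in Set.Ico (0:ℝ) 1, G ![z, y] := by
        simp only [h1]
        rw [intervalIntegral.integral_of_le zero_le_one, integral_Ioc_eq_integral_Ioo,
          ← integral_Ico_eq_integral_Ioo]
    _ = ∫ p in (Set.Ico (0:ℝ) 1 ×ˢ Set.Ico (0:ℝ) 1), G ![p.1, p.2] :=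
        (setIntegral_prod _ hint).symm
    _ = ∫ x in Set.pi Set.univ (fun _ : Fin 2 => Set.Ico (0:ℝ) 1), G x := by
        rw [← (volume_preserving_finTwoArrow ℝ).setIntegral_preimage_emb
          (MeasurableEquiv.measurableEmbedding _) (fun p => G ![p.1, p.2]) _, hpre]
        refine setIntegral_congr_fun ?_ fun x _ => ?_
        · exact MeasurableSet.univ_pi fun _ => measurableSet_Ico
        · simp [MeasurableEquiv.finTwoArrow, fin_two_eta]

def uZInt (k l : ℤ) : Matrix.SpecialLinearGroup (Fin 3) ℤ :=
  ⟨!![1, 0, l; 0, 1, k; 0, 0, 1], by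
    simp [Matrix.det_fin_three, Matrix.vecHead, Matrix.vecTail]⟩

lemma map_uZInt (k l : ℤ) :
    Matrix.SpecialLinearGroup.map (Int.castRingHom ℝ) (uZInt k l) = uMat 0 k l := by
  apply Subtype.ext
  rw [Matrix.SpecialLinearGroup.map_apply_coe]
  ext i j
  fin_cases i <;> fin_cases j <;>
    simp [uZInt, uMat, Matrix.SpecialLinearGroup.map, Matrix.map_apply,
      Matrix.vecHead, Matrix.vecTail]

def gammaZInt (a b c d : ℤ) (h : a * d - b * c = 1) :
    Matrix.SpecialLinearGroup (Fin 3) ℤ :=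
  ⟨!![a, b, 0; c, d, 0; 0, 0, 1], by
    simp [Matrix.det_fin_three, Matrix.vecHead, Matrix.vecTail]
    linarith⟩

lemma map_gammaZInt (a b c d : ℤ) (h : a * d - b * c = 1) :
    Matrix.SpecialLinearGroup.map (Int.castRingHom ℝ) (gammaZInt a b c d h)
      = gammaTilde a b c d h := by
  apply Subtype.ext
  rw [Matrix.SpecialLinearGroup.map_apply_coe]
  ext i j
  fin_cases i <;> fin_cases j <;>
    simp [gammaZInt, gammaTilde, Matrix.SpecialLinearGroup.map, Matrix.map_apply,
      Matrix.vecHead, Matrix.vecTail]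

lemma uMat_add (k l y z : ℝ) : uMat 0 k l * uMat 0 y z = uMat 0 (y + k) (z + l) := by
  apply Subtype.ext
  rw [Matrix.SpecialLinearGroup.coe_mul]
  ext i j
  fin_cases i <;> fin_cases j <;>
    simp [uMat, Matrix.mul_apply, Fin.sum_univ_three, Matrix.vecHead, Matrix.vecTail]

lemma gamma_comm (a b c d : ℤ) (h : a * d - b * c = 1) (r s : ℝ) :
    uMat 0 (c * r + d * s) (a * r + b * s) * gammaTilde a b c d h
      = gammaTilde a b c d h * uMat 0 s r := by
  apply Subtype.ext
  rw [Matrix.SpecialLinearGroup.coe_mul, Matrix.SpecialLinearGroup.coe_mul]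
  ext i j
  fin_cases i <;> fin_cases j <;>
    simp [uMat, gammaTilde, Matrix.mul_apply, Fin.sum_univ_three,
      Matrix.vecHead, Matrix.vecTail] <;> ring

theorem statement0 (F : SL3 → ℂ) (hF : Continuous F)
    (hinv : ∀ (γ : Matrix.SpecialLinearGroup (Fin 3) ℤ) (g : SL3),
      F (Matrix.SpecialLinearGroup.map (Int.castRingHom ℝ) γ * g) = F g)
    (g : SL3) (m n : ℤ) (a b c d : ℤ) (h : a * d - b * c = 1) :
    Pmn F m n (gammaTilde a b c d h * g) = Pmn F (m * a + n * c) (m * b + n * d) g := by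
  have h' : (a : ℝ) * d - b * c = 1 := by exact_mod_cast congrArg (Int.cast : ℤ → ℝ) h
  have hadbc : (a : ℂ) * d - b * c = 1 := by exact_mod_cast congrArg (Int.cast : ℤ → ℂ) h
  set m' : ℤ := m * a + n * c with hm'
  set n' : ℤ := m * b + n * d with hn'
  set G : (Fin 2 → ℝ) → ℂ := fun v =>
    F (uMat 0 (v 1) (v 0) * g) *
      Complex.exp (-2 * π * Complex.I * (m' * v 0 + n' * v 1)) with hG
  -- continuity of G
  have hSL : Continuous fun v : Fin 2 → ℝ => uMat 0 (v 1) (v 0) * g := by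
    apply continuous_induced_rng.2
    have hco : (fun v : Fin 2 → ℝ => ((uMat 0 (v 1) (v 0) * g : SL3) : Matrix (Fin 3) (Fin 3) ℝ))
        = fun v => (!![1, 0, v 0; 0, 1, v 1; 0, 0, 1] : Matrix (Fin 3) (Fin 3) ℝ)
            * (g : Matrix (Fin 3) (Fin 3) ℝ) := by
      funext v
      rw [Matrix.SpecialLinearGroup.coe_mul]
      rfl
    simp only [Function.comp_def]
    rw [hco]
    refine Continuous.matrix_mul ?_ continuous_const
    refine continuous_matrix fun i j => ?_
    fin_cases i <;> fin_cases j <;> simp <;>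
      first
        | exact continuous_const
        | exact continuous_apply _
  have hGcont : Continuous G := by
    refine (hF.comp hSL).mul (Complex.continuous_exp.comp ?_)
    have : Continuous fun v : Fin 2 → ℝ => ((v 0 : ℂ)) :=
      Complex.continuous_ofReal.comp (continuous_apply 0)
    have h1 : Continuous fun v : Fin 2 → ℝ => ((v 1 : ℂ)) :=
      Complex.continuous_ofReal.comp (continuous_apply 1)
    continuity
  -- periodicity of G
  have hper : ∀ (p : Fin 2 → ℤ) (x : Fin 2 → ℝ), G ((fun i => (p i : ℝ)) + x) = G x := by
    intro p x
    have hv0 : ((fun i => (p i : ℝ)) + x) 0 = x 0 + p 0 := by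
      simp [Pi.add_apply, add_comm]
    have hv1 : ((fun i => (p i : ℝ)) + x) 1 = x 1 + p 1 := by
      simp [Pi.add_apply, add_comm]
    simp only [hG, hv0, hv1]
    have hFpart : F (uMat 0 (x 1 + p 1) (x 0 + p 0) * g) = F (uMat 0 (x 1) (x 0) * g) := by
      rw [← uMat_add, mul_assoc, ← map_uZInt (p 1) (p 0), hinv]
    rw [hFpart]
    congr 1
    have harg : (-2 * π * Complex.I *
          (m' * ((x 0 + (p 0 : ℝ) : ℝ) : ℂ) + n' * ((x 1 + (p 1 : ℝ) : ℝ) : ℂ)))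
        = (-2 * π * Complex.I * (m' * x 0 + n' * x 1))
          + ((-(m' * p 0 + n' * p 1) : ℤ) : ℂ) * (2 * π * Complex.I) := by
      push_cast
      ring
    rw [harg, Complex.exp_add, Complex.exp_int_mul_two_pi_mul_I, mul_one]
  -- matrices for the change of variables
  set Ai : Matrix (Fin 2) (Fin 2) ℤ := !![d, -b; -c, a] with hAi
  set Bi : Matrix (Fin 2) (Fin 2) ℤ := !![a, b; c, d] with hBi
  have hAB : Ai * Bi = 1 := by
    rw [hAi, hBi, Matrix.mul_fin_two,
      show d * a + -b * c = (1:ℤ) by linear_combination h,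
      show d * b + -b * d = (0:ℤ) by ring,
      show -c * a + a * c = (0:ℤ) by ring,
      show -c * b + a * d = (1:ℤ) by linear_combination h, ← Matrix.one_fin_two]
  have hBA : Bi * Ai = 1 := by
    rw [hBi, hAi, Matrix.mul_fin_two,
      show a * d + b * -c = (1:ℤ) by linear_combination h,
      show a * -b + b * a = (0:ℤ) by ring,
      show c * d + d * -c = (0:ℤ) by ring,
      show c * -b + d * a = (1:ℤ) by linear_combination h, ← Matrix.one_fin_two]
  set Mi : Matrix (Fin 2) (Fin 2) ℝ := Ai.map (Int.cast : ℤ → ℝ) with hMi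
  have hmv : ∀ z y : ℝ, Mi.mulVec ![z, y] = ![d * z - b * y, -c * z + a * y] := by
    intro z y
    funext i
    fin_cases i <;>
      simp [hMi, hAi, Matrix.mulVec, dotProduct, Fin.sum_univ_two,
        Matrix.map_apply] <;> ring
  have hGM : Continuous fun x => G (Mi.mulVec x) := by
    refine hGcont.comp ?_
    have : Continuous fun x : Fin 2 → ℝ => Mi.mulVecLin x :=
      Mi.mulVecLin.continuous_of_finiteDimensional
    exact this
  -- right-hand side
  have hRHS : Pmn F m' n' g
      = ∫ x in Set.pi Set.univ (fun _ : Fin 2 => Set.Ico (0:ℝ) 1), G x := by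
    rw [← double_integral_eq G hGcont]
    unfold Pmn
    refine intervalIntegral.integral_congr fun z _ => ?_
    refine intervalIntegral.integral_congr fun y _ => ?_
    simp [hG]
  -- left-hand side
  have hLHS : Pmn F m n (gammaTilde a b c d h * g)
      = ∫ x in Set.pi Set.univ (fun _ : Fin 2 => Set.Ico (0:ℝ) 1), G (Mi.mulVec x) := by
    rw [← double_integral_eq (fun x => G (Mi.mulVec x)) hGM]
    unfold Pmn
    refine intervalIntegral.integral_congr fun z _ => ?_
    refine intervalIntegral.integral_congr fun y _ => ?_
    rw [hmv]
    have e1 : c * (d * z - b * y) + d * (-c * z + a * y) = y := by linear_combination y * h'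
    have e2 : a * (d * z - b * y) + b * (-c * z + a * y) = z := by linear_combination z * h'
    have hcomm := gamma_comm a b c d h (d * z - b * y) (-c * z + a * y)
    rw [e1, e2] at hcomm
    have hFpart : F (uMat 0 y z * (gammaTilde a b c d h * g))
        = F (uMat 0 (-c * z + a * y) (d * z - b * y) * g) := by
      rw [← mul_assoc, hcomm, mul_assoc, ← map_gammaZInt a b c d h, hinv]
    have hepart : (-2 * π * Complex.I * ((m : ℂ) * z + n * y))
        = -2 * π * Complex.I * (m' * (d * z - b * y) + n' * (-c * z + a * y)) := by
      rw [hm', hn']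
      push_cast
      linear_combination (2 * (π:ℂ) * Complex.I * ((m:ℂ) * z + (n:ℂ) * y)) * hadbc
    simp only [hG, Matrix.cons_val_zero, Matrix.cons_val_one, Matrix.head_cons]
    rw [hFpart, hepart]
    push_cast
    ring_nf
  rw [hLHS, hRHS, hMi]
  exact sq_integral_comp Ai Bi hAB hBA G hper
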